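/- arXiv:2010.13675 — 2 statements merged into one kernel-verified Lean document; each statement's English description precedes it below -/
import Mathlib

section
/- Let Q, T ⊆ List A, let AT = {[a] ++ t : a ∈ A, t ∈ T}, and assume the relevant coproducts and products exist. If the canonical morphism v_{Q, T ⊆ T∪AT} : N_{Q, T∪AT} → N_{Q,T} (which lies in E) is not an isomorphism, then there exist a ∈ A and t ∈ T such that the canonical morphism v_{Q, T ⊆ T∪{[a]++t}} : N_{Q, T∪{[a]++t}} → N_{Q,T} is not an isomorphism. -/
open CategoryTheory

/-- A factorization system `(E, M)` on a category `C`. -/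
structure FactSys {C : Type*} [Category C] (E M : MorphismProperty C) : Prop where
  E_iso : ∀ {X Y : C} (f : X ⟶ Y), IsIso f → E f
  M_iso : ∀ {X Y : C} (f : X ⟶ Y), IsIso f → M f
  E_comp : ∀ {X Y Z : C} (f : X ⟶ Y) (g : Y ⟶ Z), E f → E g → E (f ≫ g)
  M_comp : ∀ {X Y Z : C} (f : X ⟶ Y) (g : Y ⟶ Z), M f → M g → M (f ≫ g)
  fact : ∀ {X Y : C} (f : X ⟶ Y), ∃ (Z : C) (e : X ⟶ Z) (m : Z ⟶ Y), E e ∧ M m ∧ e ≫ m = f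
  diag : ∀ {X Y Z W : C} (e : X ⟶ Y) (m : Z ⟶ W) (u : X ⟶ Z) (v : Y ⟶ W),
    E e → M m → e ≫ v = u ≫ m → ∃! d : Y ⟶ Z, e ≫ d = u ∧ d ≫ m = v

/-- The setting of the chosen `(E,M)`-factorizations `N Q T` of the canonical morphisms
`c_{Q,T} : ∐_Q X ⟶ ∏_T Y` induced by the language `ℓ`: for every `Q` there is a copower
`P Q` of `X` over `Q` (with injections `ι`), for every `T` a power `R T` of `Y` over `T`
(with projections `π`), and for all `Q, T` a chosen factorization
`e Q T : P Q ⟶ N Q T` in `E`, `m Q T : N Q T ⟶ R T` in `M` of `c_{Q,T}`. -/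
structure Setup (A : Type) {C : Type*} [Category C] (E M : MorphismProperty C)
    (X Y : C) (ℓ : List A → (X ⟶ Y)) where
  P : Set (List A) → C
  ι : ∀ (Q : Set (List A)) (q : List A), q ∈ Q → (X ⟶ P Q)
  hP : ∀ (Q : Set (List A)) (Z : C) (f : ∀ q : List A, q ∈ Q → (X ⟶ Z)),
    ∃! g : P Q ⟶ Z, ∀ (q : List A) (hq : q ∈ Q), ι Q q hq ≫ g = f q hq
  R : Set (List A) → C
  π : ∀ (T : Set (List A)) (t : List A), t ∈ T → (R T ⟶ Y)
  hR : ∀ (T : Set (List A)) (Z : C) (f : ∀ t : List A, t ∈ T → (Z ⟶ Y)),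
    ∃! g : Z ⟶ R T, ∀ (t : List A) (ht : t ∈ T), g ≫ π T t ht = f t ht
  N : Set (List A) → Set (List A) → C
  e : ∀ Q T : Set (List A), P Q ⟶ N Q T
  m : ∀ Q T : Set (List A), N Q T ⟶ R T
  he : ∀ Q T : Set (List A), E (e Q T)
  hm : ∀ Q T : Set (List A), M (m Q T)
  hfact : ∀ (Q T : Set (List A)) (q : List A) (hq : q ∈ Q) (t : List A) (ht : t ∈ T),
    ι Q q hq ≫ e Q T ≫ m Q T ≫ π T t ht = ℓ (q ++ t)

namespace Setup

variable {A : Type} {C : Type*} [Category C] {E M : MorphismProperty C}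
  {X Y : C} {ℓ : List A → (X ⟶ Y)}

/-- `u` is the canonical morphism `u_{Q⊆Q',T} : N Q T ⟶ N Q' T`:
it satisfies `u ∘ e_{Q,T} = e_{Q',T} ∘ (canonical inclusion)` and
`m_{Q',T} ∘ u = m_{Q,T}`. -/
def IsU (S : Setup A E M X Y ℓ) {Q Q' : Set (List A)} (T : Set (List A))
    (h : Q ⊆ Q') (u : S.N Q T ⟶ S.N Q' T) : Prop :=
  (∀ (q : List A) (hq : q ∈ Q),
    S.ι Q q hq ≫ S.e Q T ≫ u = S.ι Q' q (h hq) ≫ S.e Q' T) ∧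
  u ≫ S.m Q' T = S.m Q T

/-- `v` is the canonical morphism `v_{Q,T⊆T'} : N Q T' ⟶ N Q T`:
it satisfies `v ∘ e_{Q,T'} = e_{Q,T}` and
`m_{Q,T} ∘ v = (canonical restriction) ∘ m_{Q,T'}`. -/
def IsV (S : Setup A E M X Y ℓ) {T T' : Set (List A)} (Q : Set (List A))
    (h : T ⊆ T') (v : S.N Q T' ⟶ S.N Q T) : Prop :=
  (S.e Q T' ≫ v = S.e Q T) ∧
  (∀ (t : List A) (ht : t ∈ T),
    v ≫ S.m Q T ≫ S.π T t ht = S.m Q T' ≫ S.π T' t (h ht))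

end Setup

namespace Setup

variable {A : Type} {C : Type*} [Category C] {E M : MorphismProperty C}
  {X Y : C} {ℓ : List A → (X ⟶ Y)}

lemma P_ext (S : Setup A E M X Y ℓ) {Q : Set (List A)} {Z : C} {f g : S.P Q ⟶ Z}
    (h : ∀ (q : List A) (hq : q ∈ Q), S.ι Q q hq ≫ f = S.ι Q q hq ≫ g) : f = g := by
  obtain ⟨u, -, huniq⟩ := S.hP Q Z (fun q hq => S.ι Q q hq ≫ f)
  exact (huniq f fun q hq => rfl).trans (huniq g fun q hq => (h q hq).symm).symm

lemma R_ext (S : Setup A E M X Y ℓ) {T : Set (List A)} {Z : C} {f g : Z ⟶ S.R T}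
    (h : ∀ (t : List A) (ht : t ∈ T), f ≫ S.π T t ht = g ≫ S.π T t ht) : f = g := by
  obtain ⟨u, -, huniq⟩ := S.hR T Z (fun t ht => f ≫ S.π T t ht)
  exact (huniq f fun t ht => rfl).trans (huniq g fun t ht => (h t ht).symm).symm

lemma exists_isV (S : Setup A E M X Y ℓ) (fs : FactSys E M) (Q : Set (List A))
    {T T' : Set (List A)} (h : T ⊆ T') : ∃ v, S.IsV Q h v := by
  obtain ⟨r, hr, -⟩ := S.hR T (S.N Q T') (fun t ht => S.m Q T' ≫ S.π T' t (h ht))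
  have hsq : S.e Q T' ≫ r = S.e Q T ≫ S.m Q T := by
    apply S.R_ext
    intro t ht
    have h1 : (S.e Q T' ≫ r) ≫ S.π T t ht = S.e Q T' ≫ S.m Q T' ≫ S.π T' t (h ht) := by
      rw [Category.assoc, hr t ht]
    rw [h1]
    apply S.P_ext
    intro q hq
    have := S.hfact Q T' q hq t (h ht)
    have := S.hfact Q T q hq t ht
    simp only [Category.assoc]
    rw [S.hfact Q T' q hq t (h ht), S.hfact Q T q hq t ht]
  obtain ⟨d, ⟨hd1, hd2⟩, -⟩ :=
    fs.diag (S.e Q T') (S.m Q T) (S.e Q T) r (S.he Q T') (S.hm Q T) hsq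
  refine ⟨d, hd1, fun t ht => ?_⟩
  rw [← Category.assoc, hd2, hr t ht]

lemma isV_unique (S : Setup A E M X Y ℓ) (fs : FactSys E M) (Q : Set (List A))
    {T T' : Set (List A)} (h : T ⊆ T') {v v' : S.N Q T' ⟶ S.N Q T}
    (hv : S.IsV Q h v) (hv' : S.IsV Q h v') : v = v' := by
  have hmm : v ≫ S.m Q T = v' ≫ S.m Q T := by
    apply S.R_ext
    intro t ht
    rw [Category.assoc, Category.assoc, hv.2 t ht, hv'.2 t ht]
  have hsq : S.e Q T' ≫ (v ≫ S.m Q T) = S.e Q T ≫ S.m Q T := by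
    rw [← Category.assoc, hv.1]
  obtain ⟨d, -, huniq⟩ :=
    fs.diag (S.e Q T') (S.m Q T) (S.e Q T) (v ≫ S.m Q T) (S.he Q T') (S.hm Q T) hsq
  exact (huniq v ⟨hv.1, rfl⟩).trans (huniq v' ⟨hv'.1, hmm.symm⟩).symm

end Setup

/-- if the canonical morphism `v_{Q, T ⊆ T∪AT} : N_{Q,T∪AT} → N_{Q,T}`
is not an isomorphism, then already for some single word `[a] ++ t` with `a ∈ A`,
`t ∈ T`, the canonical morphism `v_{Q, T ⊆ T∪{[a]++t}}` is not an isomorphism. -/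
theorem stmt18 {A : Type} [Fintype A] {C : Type*} [Category C]
    (E M : MorphismProperty C) (fs : FactSys E M) {X Y : C}
    (ℓ : List A → (X ⟶ Y)) (S : Setup A E M X Y ℓ)
    (Q T : Set (List A))
    (h : ∃ v : S.N Q (T ∪ {w | ∃ a : A, ∃ t ∈ T, w = [a] ++ t}) ⟶ S.N Q T,
      S.IsV Q Set.subset_union_left v ∧ ¬ IsIso v) :
    ∃ (a : A) (t : List A) (_ : t ∈ T),
      ∃ v' : S.N Q (T ∪ {[a] ++ t}) ⟶ S.N Q T,
        S.IsV Q Set.subset_union_left v' ∧ ¬ IsIso v' := by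
  by_contra hcon
  push_neg at hcon
  set TA : Set (List A) := T ∪ {w | ∃ a : A, ∃ t ∈ T, w = [a] ++ t} with hTA
  obtain ⟨v, hv, hni⟩ := h
  apply hni
  have hTsub : T ⊆ TA := Set.subset_union_left
  -- key: every projection of m Q TA factors through v, compatibly on T
  have key : ∀ (w : List A) (hw : w ∈ TA), ∃ gw : S.N Q T ⟶ Y,
      S.m Q TA ≫ S.π TA w hw = v ≫ gw ∧
      ∀ hwT : w ∈ T, gw = S.m Q T ≫ S.π T w hwT := by
    intro w hw
    by_cases hwT : w ∈ T
    · exact ⟨S.m Q T ≫ S.π T w hwT, (hv.2 w hwT).symm, fun _ => rfl⟩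
    · have hwAT : w ∈ {w | ∃ a : A, ∃ t ∈ T, w = [a] ++ t} := hw.resolve_left hwT
      obtain ⟨a, t, ht, rfl⟩ := hwAT
      set T' : Set (List A) := T ∪ {[a] ++ t} with hT'
      have hsub1 : T ⊆ T' := Set.subset_union_left
      have hsub2 : T' ⊆ TA := by
        intro x hx
        rcases hx with hx | hx
        · exact Or.inl hx
        · exact Or.inr ⟨a, t, ht, hx⟩
      obtain ⟨v', hv'⟩ := S.exists_isV fs Q hsub1
      have hiso : IsIso v' := hcon a t ht v' hv'
      obtain ⟨ww, hww⟩ := S.exists_isV fs Q hsub2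
      have hcompV : S.IsV Q hTsub (ww ≫ v') := by
        constructor
        · rw [← Category.assoc, hww.1, hv'.1]
        · intro s hs
          rw [Category.assoc, hv'.2 s hs, hww.2 s (hsub1 hs)]
      have hveq : v = ww ≫ v' := S.isV_unique fs Q hTsub hv hcompV
      have hmem : [a] ++ t ∈ T' := Or.inr rfl
      refine ⟨inv v' ≫ S.m Q T' ≫ S.π T' ([a] ++ t) hmem, ?_, fun hwT' => absurd hwT' hwT⟩
      rw [hveq]
      have : ww ≫ v' ≫ inv v' ≫ S.m Q T' ≫ S.π T' ([a] ++ t) hmem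
          = ww ≫ S.m Q T' ≫ S.π T' ([a] ++ t) hmem := by
        rw [← Category.assoc (v'), IsIso.hom_inv_id, Category.id_comp]
      rw [Category.assoc, this, hww.2 ([a] ++ t) hmem]
  choose gw hgw1 hgw2 using key
  obtain ⟨g, hg, -⟩ := S.hR TA (S.N Q T) gw
  have hvg : v ≫ g = S.m Q TA := by
    apply S.R_ext
    intro w hw
    rw [Category.assoc, hg w hw, ← hgw1 w hw]
  have hsq : S.e Q T ≫ g = S.e Q TA ≫ S.m Q TA := by
    rw [← hv.1, Category.assoc, hvg]
  obtain ⟨d, ⟨hd1, hd2⟩, -⟩ :=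
    fs.diag (S.e Q T) (S.m Q TA) (S.e Q TA) g (S.he Q T) (S.hm Q TA) hsq
  have hvd : v ≫ d = 𝟙 _ := by
    obtain ⟨d0, -, hu0⟩ := fs.diag (S.e Q TA) (S.m Q TA) (S.e Q TA) (S.m Q TA)
      (S.he Q TA) (S.hm Q TA) rfl
    have h1 := hu0 (v ≫ d) ⟨by rw [← Category.assoc, hv.1, hd1],
      by rw [Category.assoc, hd2, hvg]⟩
    have h2 := hu0 (𝟙 _) ⟨Category.comp_id _, Category.id_comp _⟩
    exact h1.trans h2.symm
  have hdv : d ≫ v = 𝟙 _ := by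
    have hdm : (d ≫ v) ≫ S.m Q T = 𝟙 _ ≫ S.m Q T := by
      apply S.R_ext
      intro t ht
      simp only [Category.id_comp, Category.assoc]
      rw [hv.2 t ht, ← Category.assoc, hd2, hg t (hTsub ht), hgw2 t (hTsub ht) ht]
    obtain ⟨d0, -, hu0⟩ := fs.diag (S.e Q T) (S.m Q T) (S.e Q T) (S.m Q T)
      (S.he Q T) (S.hm Q T) rfl
    have h1 := hu0 (d ≫ v) ⟨by rw [← Category.assoc, hd1, hv.1],
      hdm.trans (Category.id_comp _)⟩
    have h2 := hu0 (𝟙 _) ⟨Category.comp_id _, Category.id_comp _⟩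
    exact h1.trans h2.symm
  exact ⟨d, hvd, hdv⟩
end

section
/- Let Q, T ⊆ List A, let QA = {q ++ [a] : q ∈ Q, a ∈ A}, and assume the relevant coproducts and products exist. If the canonical morphism u_{Q ⊆ Q∪QA, T} : N_{Q,T} → N_{Q∪QA, T} (which lies in M) is not an isomorphism, then there exist q ∈ Q and a ∈ A such that the canonical morphism u_{Q ⊆ Q∪{q++[a]}, T} : N_{Q,T} → N_{Q∪{q++[a]}, T} is not an isomorphism. -/
open CategoryTheory

namespace Setup

variable {A : Type} {C : Type*} [Category C] {E M : MorphismProperty C}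
  {X Y : C} {ℓ : List A → (X ⟶ Y)}

/-- Existence and uniqueness of the canonical morphism `u_{Q⊆Q',T}`. -/
lemma existsU (S : Setup A E M X Y ℓ) (fs : FactSys E M) {Q Q' : Set (List A)}
    (T : Set (List A)) (h : Q ⊆ Q') :
    ∃ u : S.N Q T ⟶ S.N Q' T, S.IsU T h u ∧ ∀ u', S.IsU T h u' → u' = u := by
  obtain ⟨j, hj, -⟩ := S.hP Q (S.P Q') (fun q hq => S.ι Q' q (h hq))
  have hsq : S.e Q T ≫ S.m Q T = (j ≫ S.e Q' T) ≫ S.m Q' T := by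
    apply S.P_ext
    intro q hq
    apply S.R_ext
    intro t ht
    have h1 := S.hfact Q T q hq t ht
    have h2 := S.hfact Q' T q (h hq) t ht
    simp only [Category.assoc] at h1 h2 ⊢
    rw [h1, reassoc_of% (hj q hq), h2]
  obtain ⟨d, ⟨hd1, hd2⟩, hdu⟩ := fs.diag (S.e Q T) (S.m Q' T) (j ≫ S.e Q' T) (S.m Q T)
    (S.he Q T) (S.hm Q' T) hsq
  refine ⟨d, ⟨fun q hq => ?_, hd2⟩, fun u' ⟨hu1, hu2⟩ => ?_⟩
  · rw [hd1, ← Category.assoc, hj q hq]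
  · apply hdu
    refine ⟨?_, hu2⟩
    apply S.P_ext
    intro q hq
    rw [reassoc_of% (hj q hq), ← Category.assoc, ← hu1 q hq, Category.assoc]

end Setup

/-- if the canonical morphism `u_{Q ⊆ Q∪QA, T} : N_{Q,T} → N_{Q∪QA,T}`
is not an isomorphism, then already for some single word `q ++ [a]` with `q ∈ Q`,
`a ∈ A`, the canonical morphism `u_{Q ⊆ Q∪{q++[a]}, T}` is not an isomorphism. -/
theorem stmt19 {A : Type} [Fintype A] {C : Type*} [Category C]
    (E M : MorphismProperty C) (fs : FactSys E M) {X Y : C}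
    (ℓ : List A → (X ⟶ Y)) (S : Setup A E M X Y ℓ)
    (Q T : Set (List A))
    (h : ∃ u : S.N Q T ⟶ S.N (Q ∪ {w | ∃ q ∈ Q, ∃ a : A, w = q ++ [a]}) T,
      S.IsU T Set.subset_union_left u ∧ ¬ IsIso u) :
    ∃ (q : List A) (_ : q ∈ Q) (a : A),
      ∃ u' : S.N Q T ⟶ S.N (Q ∪ {q ++ [a]}) T,
        S.IsU T Set.subset_union_left u' ∧ ¬ IsIso u' := by
  by_contra hcon
  push_neg at hcon
  set QA : Set (List A) := {w | ∃ q ∈ Q, ∃ a : A, w = q ++ [a]} with hQA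
  set QU : Set (List A) := Q ∪ QA with hQU
  obtain ⟨u, hu, hniso⟩ := h
  apply hniso
  -- uniqueness of u
  obtain ⟨u₀, hu₀, huniq⟩ := S.existsU (Q' := QU) fs T Set.subset_union_left
  have hu_eq : u = u₀ := huniq u hu
  -- key componentwise maps
  have key : ∀ (q' : List A) (hq' : q' ∈ QU), ∃ x : X ⟶ S.N Q T,
      x ≫ u = S.ι QU q' hq' ≫ S.e QU T ∧
      (∀ hq : q' ∈ Q, x = S.ι Q q' hq ≫ S.e Q T) := by
    intro q' hq'
    by_cases hq : q' ∈ Q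
    · exact ⟨S.ι Q q' hq ≫ S.e Q T, by rw [Category.assoc, hu.1 q' hq], fun _ => rfl⟩
    · obtain ⟨q, hqQ, a, rfl⟩ : ∃ q ∈ Q, ∃ a : A, q' = q ++ [a] := by
        rcases hq' with h1 | h2
        · exact absurd h1 hq
        · exact h2
      -- the singleton extension
      obtain ⟨u', hu', hu'uniq⟩ := S.existsU (Q' := Q ∪ {q ++ [a]}) fs T
        Set.subset_union_left
      have hiso : IsIso u' := hcon q hqQ a u' hu'
      -- the map from the singleton extension to the full extension
      have hsub : Q ∪ {q ++ [a]} ⊆ QU := by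
        intro w hw
        rcases hw with h1 | h2
        · exact Or.inl h1
        · exact Or.inr ⟨q, hqQ, a, h2⟩
      obtain ⟨w, hw, -⟩ := S.existsU (Q' := QU) fs T hsub
      have hcomp : u' ≫ w = u := by
        rw [hu_eq]
        apply huniq
        constructor
        · intro s hs
          rw [reassoc_of% (hu'.1 s hs)]
          exact hw.1 s (Or.inl hs)
        · rw [Category.assoc, hw.2, hu'.2]
      have hmem : q ++ [a] ∈ Q ∪ {q ++ [a]} := Or.inr rfl
      refine ⟨S.ι (Q ∪ {q ++ [a]}) (q ++ [a]) hmem ≫ S.e (Q ∪ {q ++ [a]}) T ≫ inv u',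
        ?_, fun hqc => absurd hqc hq⟩
      have hinv : inv u' ≫ u = w := by rw [← hcomp, IsIso.inv_hom_id_assoc]
      simp only [Category.assoc]
      rw [hinv]
      exact hw.1 _ hmem
  choose x hx1 hx2 using key
  obtain ⟨k, hk, -⟩ := S.hP QU (S.N Q T) x
  have hku : k ≫ u = S.e QU T := by
    apply S.P_ext
    intro q' hq'
    rw [← Category.assoc, hk q' hq', hx1 q' hq']
  have hsq : S.e QU T ≫ S.m QU T = k ≫ S.m Q T := by
    rw [← hu.2, ← hku, Category.assoc]
  obtain ⟨d, ⟨hd1, hd2⟩, -⟩ := fs.diag (S.e QU T) (S.m Q T) k (S.m QU T)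
    (S.he QU T) (S.hm Q T) hsq
  have hud : u ≫ d = 𝟙 (S.N Q T) := by
    obtain ⟨d', -, hd'u⟩ := fs.diag (S.e Q T) (S.m Q T) (S.e Q T) (S.m Q T)
      (S.he Q T) (S.hm Q T) rfl
    have e1 : u ≫ d = d' := by
      apply hd'u
      constructor
      · apply S.P_ext
        intro q hq
        rw [reassoc_of% (hu.1 q hq), hd1, hk q (Or.inl hq), hx2 q (Or.inl hq) hq]
      · rw [Category.assoc, hd2, hu.2]
    have e2 : 𝟙 (S.N Q T) = d' := by
      apply hd'u; simp
    rw [e1, e2]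
  have hdu : d ≫ u = 𝟙 (S.N QU T) := by
    obtain ⟨d', -, hd'u⟩ := fs.diag (S.e QU T) (S.m QU T) (S.e QU T) (S.m QU T)
      (S.he QU T) (S.hm QU T) rfl
    have e1 : d ≫ u = d' := by
      apply hd'u
      constructor
      · rw [← Category.assoc, hd1, hku]
      · rw [Category.assoc, hu.2, hd2]
    have e2 : 𝟙 (S.N QU T) = d' := by
      apply hd'u; simp
    rw [e1, e2]
  exact ⟨d, hud, hdu⟩
end
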